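/- Observational entropy is lower-bounded by the von Neumann entropy: for any density matrix ρ and any coarse-graining {P_i} by orthogonal projectors summing to identity, S_C(ρ) ≥ S_vN(ρ) = −tr(ρ ln ρ). -/

import Mathlib

open Real Matrix
open scoped ComplexOrder

variable {d : ℕ} {ι : Type*} [Fintype ι] [DecidableEq ι]

/-- Macrostate probability `p_i = tr(P_i ρ)`. -/
noncomputable def obsProb (P : ι → Matrix (Fin d) (Fin d) ℂ)
    (ρ : Matrix (Fin d) (Fin d) ℂ) (i : ι) : ℝ := ((P i * ρ).trace).re

/-- Macrostate volume `V_i = tr(P_i)`. -/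
noncomputable def obsVol (P : ι → Matrix (Fin d) (Fin d) ℂ) (i : ι) : ℝ :=
  ((P i).trace).re

/-- Observational entropy `S_C(ρ) = −∑_i p_i ln p_i + ∑_i p_i ln V_i`. -/
noncomputable def obsEntropy (P : ι → Matrix (Fin d) (Fin d) ℂ)
    (ρ : Matrix (Fin d) (Fin d) ℂ) : ℝ :=
  ∑ i, (Real.negMulLog (obsProb P ρ i) + obsProb P ρ i * Real.log (obsVol P i))

/-- Von Neumann entropy `S_vN(ρ) = −tr(ρ ln ρ)`, computed from the spectrum
of the Hermitian matrix `ρ`. -/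
noncomputable def vnEntropy {ρ : Matrix (Fin d) (Fin d) ℂ}
    (hρ : ρ.IsHermitian) : ℝ :=
  ∑ i, Real.negMulLog (hρ.eigenvalues i)

lemma aux_ineq (a lam y : ℝ) (ha : 0 ≤ a) (hlam : 0 ≤ lam) (hy : 0 < y) :
    a * Real.negMulLog lam ≤ a * (y - lam) - a * lam * Real.log y := by
  rcases hlam.eq_or_lt with h | h
  · simp [← h, Real.negMulLog]
    positivity
  · have h1 : Real.log (y / lam) ≤ y / lam - 1 := Real.log_le_sub_one_of_pos (by positivity)
    rw [Real.log_div hy.ne' h.ne'] at h1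
    have h2 : lam * (Real.log y - Real.log lam) ≤ y - lam := by
      have := mul_le_mul_of_nonneg_left h1 h.le
      calc lam * (Real.log y - Real.log lam) ≤ lam * (y / lam - 1) := this
        _ = y - lam := by field_simp
    have h3 : Real.negMulLog lam ≤ (y - lam) - lam * Real.log y := by
      rw [Real.negMulLog]; nlinarith
    calc a * Real.negMulLog lam ≤ a * ((y - lam) - lam * Real.log y) :=
          mul_le_mul_of_nonneg_left h3 ha
      _ = a * (y - lam) - a * lam * Real.log y := by ring

/-- observational entropy is lower-bounded by the von Neumann
entropy: `S_C(ρ) ≥ S_vN(ρ) = −tr(ρ ln ρ)`. -/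
theorem vnEntropy_le_obsEntropy
    (P : ι → Matrix (Fin d) (Fin d) ℂ)
    (hherm : ∀ i, (P i).IsHermitian) (hidem : ∀ i, P i * P i = P i)
    (hnz : ∀ i, P i ≠ 0) (horth : ∀ i j, i ≠ j → P i * P j = 0)
    (hsum : ∑ i, P i = 1)
    (ρ : Matrix (Fin d) (Fin d) ℂ) (hρ : ρ.PosSemidef) (htr : ρ.trace = 1) :
    vnEntropy hρ.1 ≤ obsEntropy P ρ := by
  set lam : Fin d → ℝ := hρ.1.eigenvalues with hlamdef
  have hlam_nonneg : ∀ k, 0 ≤ lam k := hρ.eigenvalues_nonneg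
  set U : Matrix (Fin d) (Fin d) ℂ := (hρ.1.eigenvectorUnitary : Matrix (Fin d) (Fin d) ℂ) with hU
  have hUU : U * star U = 1 := Matrix.mem_unitaryGroup_iff.mp hρ.1.eigenvectorUnitary.2
  have hUU' : star U * U = 1 := Matrix.mem_unitaryGroup_iff'.mp hρ.1.eigenvectorUnitary.2
  have hP : ∀ i, (P i).PosSemidef := fun i => by
    have := Matrix.posSemidef_conjTranspose_mul_self (P i)
    rwa [(hherm i).eq, hidem i] at this
  set M : ι → Matrix (Fin d) (Fin d) ℂ := fun i => star U * P i * U with hM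
  have hMpsd : ∀ i, (M i).PosSemidef := fun i => by
    have := (hP i).conjTranspose_mul_mul_same U
    rwa [← Matrix.star_eq_conjTranspose] at this
  set a : ι → Fin d → ℝ := fun i k => ((M i) k k).re with ha
  have ha_nonneg : ∀ i k, 0 ≤ a i k := fun i k => by
    have h0 : (0 : ℂ) ≤ (M i) k k := by
      exact (hMpsd i).diag_nonneg
    exact (Complex.le_def.mp h0).1
  have hsumM : ∑ i, M i = 1 := by
    simp only [hM, ← Finset.mul_sum, ← Finset.sum_mul]
    rw [hsum, Matrix.mul_one, hUU']
  have ha_sum_i : ∀ k, ∑ i, a i k = 1 := fun k => by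
    have h1 : (∑ i, M i) k k = 1 := by rw [hsumM]; simp [Matrix.one_apply]
    simp only [Matrix.sum_apply] at h1
    have := congrArg Complex.re h1
    simpa [Complex.re_sum] using this
  have ha_sum_k : ∀ i, ∑ k, a i k = obsVol P i := fun i => by
    have h1 : (M i).trace = (P i).trace := by
      rw [hM]
      calc (star U * P i * U).trace = (U * (star U * P i)).trace := Matrix.trace_mul_comm _ _
        _ = (P i).trace := by rw [← Matrix.mul_assoc, hUU, Matrix.one_mul]
    have := congrArg Complex.re h1
    simpa [Matrix.trace, Matrix.diag, Complex.re_sum, obsVol] using this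
  -- p i = ∑ k, a i k * lam k
  have hp : ∀ i, obsProb P ρ i = ∑ k, a i k * lam k := fun i => by
    have hspec : ρ = U * Matrix.diagonal (Complex.ofReal ∘ lam) * star U := by
      simpa using hρ.1.spectral_theorem
    have h1 : (P i * ρ).trace = (M i * Matrix.diagonal (Complex.ofReal ∘ lam)).trace := by
      conv_lhs => rw [hspec]
      simp only [hM]
      rw [show P i * (U * Matrix.diagonal (Complex.ofReal ∘ lam) * star U)
            = (P i * U * Matrix.diagonal (Complex.ofReal ∘ lam)) * star U by
          simp [Matrix.mul_assoc],
        Matrix.trace_mul_comm,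
        show star U * (P i * U * Matrix.diagonal (Complex.ofReal ∘ lam))
            = (star U * P i * U) * Matrix.diagonal (Complex.ofReal ∘ lam) by
          simp [Matrix.mul_assoc]]
    have h2 : (M i * Matrix.diagonal (Complex.ofReal ∘ lam)).trace
        = ∑ k, (M i) k k * (lam k : ℂ) := by
      simp [Matrix.trace, Matrix.diag, Matrix.mul_diagonal]
    rw [obsProb, h1, h2]
    simp [Complex.re_sum, a]
  have hp_nonneg : ∀ i, 0 ≤ obsProb P ρ i := fun i => by
    rw [hp i]
    exact Finset.sum_nonneg fun k _ => mul_nonneg (ha_nonneg i k) (hlam_nonneg k)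
  -- V i > 0
  have hV_pos : ∀ i, 0 < obsVol P i := fun i => by
    have h1 : (P i).trace = ((P i)ᴴ * P i).trace := by rw [(hherm i).eq, hidem i]
    have h2 : ((P i).trace).re = ∑ j, ∑ k, Complex.normSq ((P i) k j) := by
      rw [h1]
      simp [Matrix.trace, Matrix.diag, Matrix.mul_apply, Complex.re_sum,
        Matrix.conjTranspose_apply, Complex.normSq_apply]
    rw [obsVol, h2]
    obtain ⟨j, k, hjk⟩ : ∃ j k, (P i) j k ≠ 0 := by
      by_contra h
      push_neg at h
      exact hnz i (Matrix.ext fun j k => h j k)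
    refine Finset.sum_pos' (fun j _ => Finset.sum_nonneg fun k _ => Complex.normSq_nonneg _) ?_
    refine ⟨k, Finset.mem_univ _, Finset.sum_pos' (fun _ _ => Complex.normSq_nonneg _)
      ⟨j, Finset.mem_univ _, ?_⟩⟩
    exact Complex.normSq_pos.mpr hjk
  -- rewrite vnEntropy via double sum
  have key1 : vnEntropy hρ.1 = ∑ i, ∑ k, a i k * Real.negMulLog (lam k) := by
    rw [vnEntropy, Finset.sum_comm]
    congr 1
    funext k
    rw [← Finset.sum_mul, ha_sum_i k, one_mul]
  rw [key1, obsEntropy]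
  refine Finset.sum_le_sum fun i _ => ?_
  -- per-i inequality
  rcases (hp_nonneg i).eq_or_lt with hpz | hppos
  · -- p i = 0
    have hzero : ∀ k, a i k * lam k = 0 := by
      have := (hp i) ▸ hpz
      intro k
      have h := (Finset.sum_eq_zero_iff_of_nonneg
        (fun k _ => mul_nonneg (ha_nonneg i k) (hlam_nonneg k))).mp this.symm
      exact h k (Finset.mem_univ k)
    have hL : ∑ k, a i k * Real.negMulLog (lam k) = 0 := by
      refine Finset.sum_eq_zero fun k _ => ?_
      rcases mul_eq_zero.mp (hzero k) with h | h
      · rw [h, zero_mul]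
      · rw [h]; simp [Real.negMulLog]
    rw [hL, ← hpz]
    simp [Real.negMulLog]
  · -- p i > 0
    set p := obsProb P ρ i
    set V := obsVol P i
    set y := p / V with hy
    have hypos : 0 < y := div_pos hppos (hV_pos i)
    calc ∑ k, a i k * Real.negMulLog (lam k)
        ≤ ∑ k, (a i k * (y - lam k) - a i k * lam k * Real.log y) :=
          Finset.sum_le_sum fun k _ =>
            aux_ineq (a i k) (lam k) y (ha_nonneg i k) (hlam_nonneg k) hypos
      _ = y * (∑ k, a i k) - (∑ k, a i k * lam k) - (∑ k, a i k * lam k) * Real.log y := by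
          rw [Finset.mul_sum, Finset.sum_mul, ← Finset.sum_sub_distrib, ← Finset.sum_sub_distrib]
          exact Finset.sum_congr rfl fun k _ => by ring
      _ = y * V - p - p * Real.log y := by rw [ha_sum_k i, ← hp i]
      _ = - p * Real.log y := by
          rw [hy, div_mul_cancel₀ p (hV_pos i).ne']; ring
      _ = Real.negMulLog p + p * Real.log V := by
          rw [hy, Real.log_div hppos.ne' (hV_pos i).ne', Real.negMulLog]; ring
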